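/- arXiv:2410.02188 — 6 statements merged into one kernel-verified Lean document; each statement's English description precedes it below -/
import Mathlib

section
/- Let f : ℝⁿ → ℝ and c : ℝⁿ → ℝᵐ be continuously differentiable, let J(x̄) be the Jacobian of c at x̄, and let σ > 0, τ > 0. If s = 0 is a global minimizer of the function s ↦ ∇f(x̄)ᵀ s + τ‖c(x̄) + J(x̄) s‖₂ + (σ/2)‖s‖₂², then there exists ȳ ∈ ℝᵐ with ‖ȳ‖₂ ≤ τ such that ∇f(x̄) + J(x̄)ᵀ ȳ = 0, and moreover ȳ = τ c(x̄)/‖c(x̄)‖₂ whenever c(x̄) ≠ 0. In particular, if in addition c(x̄) = 0, then x̄ is a KKT point of the problem of minimizing f(x) subject to c(x) = 0, i.e., there exists y ∈ ℝᵐ with ∇f(x̄) = J(x̄)ᵀ y and c(x̄) = 0. -/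
set_option maxHeartbeats 1000000

open scoped RealInnerProductSpace

private lemma aux_nonneg {a C : ℝ} (h : ∀ t : ℝ, 0 < t → 0 ≤ a + t * C) : 0 ≤ a := by
  rcases le_or_gt C 0 with hC | hC
  · linarith [h 1 one_pos]
  · by_contra h'
    push_neg at h'
    have ht : 0 < -a / (2 * C) := div_pos (by linarith) (by linarith)
    have h2 := h _ ht
    have h3 : a + (-a / (2 * C)) * C = a / 2 := by field_simp; ring
    rw [h3] at h2; linarith

private lemma aux_norm_add {E : Type*} [NormedAddCommGroup E] [InnerProductSpace ℝ E]
    (c w : E) (hc : c ≠ 0) :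
    ‖c + w‖ ≤ ‖c‖ + ⟪c, w⟫ / ‖c‖ + ‖w‖ ^ 2 / (2 * ‖c‖) := by
  have hA : 0 < ‖c‖ := norm_pos_iff.mpr hc
  have h1 : -‖w‖ ≤ ⟪c, w⟫ / ‖c‖ := by
    rw [neg_le, ← neg_div, div_le_iff₀ hA]
    have := abs_real_inner_le_norm c w
    rw [abs_le] at this; nlinarith [this.1]
  have h2 : ‖w‖ - ‖c‖ ≤ ‖w‖ ^ 2 / (2 * ‖c‖) := by
    rw [le_div_iff₀ (by positivity)]
    nlinarith [sq_nonneg (‖c‖ - ‖w‖), sq_nonneg ‖c‖]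
  have hR : 0 ≤ ‖c‖ + ⟪c, w⟫ / ‖c‖ + ‖w‖ ^ 2 / (2 * ‖c‖) := by linarith
  have hsq : ‖c + w‖ ^ 2 = ‖c‖ ^ 2 + 2 * ⟪c, w⟫ + ‖w‖ ^ 2 := by
    rw [@norm_add_sq_real]
  have hI : ⟪c, w⟫ / ‖c‖ * ‖c‖ = ⟪c, w⟫ := div_mul_cancel₀ _ (ne_of_gt hA)
  have hW : ‖w‖ ^ 2 / (2 * ‖c‖) * (2 * ‖c‖) = ‖w‖ ^ 2 := div_mul_cancel₀ _ (by positivity)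
  have hle2 : ‖c + w‖ ^ 2 ≤ (‖c‖ + ⟪c, w⟫ / ‖c‖ + ‖w‖ ^ 2 / (2 * ‖c‖)) ^ 2 := by
    nlinarith [sq_nonneg (⟪c, w⟫ / ‖c‖ + ‖w‖ ^ 2 / (2 * ‖c‖))]
  nlinarith [norm_nonneg (c + w)]

/-- **Criticality of the regularized linearized model (Proposition `prop:kkt`).**
If `s = 0` globally minimizes `s ↦ ∇f(xb)ᵀs + τ‖c(xb) + J(xb)s‖₂ + (σ/2)‖s‖₂²`, then there
is `yb` with `‖yb‖₂ ≤ τ` and `∇f(xb) + J(xb)ᵀ yb = 0`, and `yb = τ c(xb)/‖c(xb)‖₂` whenever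
`c(xb) ≠ 0`; in particular, if `c(xb) = 0`, then `xb` is a KKT point of
`min f(x) s.t. c(x) = 0`. -/
theorem stmt_2 {n m : ℕ}
    (f : EuclideanSpace ℝ (Fin n) → ℝ)
    (c : EuclideanSpace ℝ (Fin n) → EuclideanSpace ℝ (Fin m))
    (hf : ContDiff ℝ 1 f) (hc : ContDiff ℝ 1 c)
    (xb : EuclideanSpace ℝ (Fin n)) (σ τ : ℝ) (hσ : 0 < σ) (hτ : 0 < τ)
    (hmin : ∀ s : EuclideanSpace ℝ (Fin n),
      (inner ℝ (gradient f xb) (0 : EuclideanSpace ℝ (Fin n)) : ℝ)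
          + τ * ‖c xb + fderiv ℝ c xb 0‖ + σ / 2 * ‖(0 : EuclideanSpace ℝ (Fin n))‖ ^ 2
        ≤ (inner ℝ (gradient f xb) s : ℝ) + τ * ‖c xb + fderiv ℝ c xb s‖ + σ / 2 * ‖s‖ ^ 2) :
    ∃ yb : EuclideanSpace ℝ (Fin m),
      ‖yb‖ ≤ τ ∧
      gradient f xb + ContinuousLinearMap.adjoint (fderiv ℝ c xb) yb = 0 ∧
      (c xb ≠ 0 → yb = (τ / ‖c xb‖) • c xb) ∧
      (c xb = 0 → ∃ y : EuclideanSpace ℝ (Fin m),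
        gradient f xb = ContinuousLinearMap.adjoint (fderiv ℝ c xb) y ∧ c xb = 0) := by
  set g := gradient f xb with hg
  set J := fderiv ℝ c xb with hJ
  set A := ContinuousLinearMap.adjoint J with hA
  have hm : ∀ s, τ * ‖c xb‖ ≤ ⟪g, s⟫ + τ * ‖c xb + J s‖ + σ / 2 * ‖s‖ ^ 2 := by
    intro s
    have := hmin s
    simpa using this
  by_cases hc0 : c xb = 0
  · -- case c xb = 0
    have h1 : ∀ v, 0 ≤ ⟪g, v⟫ + τ * ‖J v‖ := by
      intro v
      apply aux_nonneg (C := σ / 2 * ‖v‖ ^ 2)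
      intro t ht
      have hmt := hm (t • v)
      simp only [hc0, zero_add, map_smul, norm_smul, Real.norm_eq_abs, abs_of_pos ht,
        real_inner_smul_right, norm_zero, mul_zero, mul_pow] at hmt
      nlinarith [hmt, ht]
    have hker : ∀ v, J v = 0 → ⟪g, v⟫ = 0 := by
      intro v hv
      have ha := h1 v
      have hb := h1 (-v)
      rw [map_neg, inner_neg_right, norm_neg] at hb
      rw [hv, norm_zero] at ha hb
      linarith
    -- -g ∈ range A
    set K : Submodule ℝ (EuclideanSpace ℝ (Fin n)) := LinearMap.range (A : EuclideanSpace ℝ (Fin m) →ₗ[ℝ] EuclideanSpace ℝ (Fin n)) with hK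
    obtain ⟨p, hp, q, hq, hpq⟩ := K.exists_add_mem_mem_orthogonal (-g)
    have hqo := (Submodule.mem_orthogonal K q).mp hq
    have hJq : J q = 0 := by
      have h2 : ∀ y, ⟪y, J q⟫ = 0 := by
        intro y
        have := hqo (A y) ⟨y, rfl⟩
        rwa [ContinuousLinearMap.adjoint_inner_left] at this
      have := h2 (J q)
      rwa [inner_self_eq_zero] at this
    have hq0 : q = 0 := by
      have hgq : ⟪g, q⟫ = 0 := hker q hJq
      have hpq2 : ⟪p, q⟫ = 0 := hqo p hp
      have hq' : q = -g - p := by rw [hpq]; abel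
      have hqq : ⟪q, q⟫ = (0:ℝ) := by
        nth_rewrite 1 [hq']
        rw [inner_sub_left, inner_neg_left, hgq, hpq2]
        norm_num
      rwa [inner_self_eq_zero] at hqq
    obtain ⟨z, hz⟩ : ∃ z, A z = -g := by
      rw [hq0, add_zero] at hpq
      obtain ⟨z, hz⟩ := hp
      exact ⟨z, by rw [hpq, ← hz]; rfl⟩
    -- project z onto range J
    set K2 : Submodule ℝ (EuclideanSpace ℝ (Fin m)) := LinearMap.range (J : EuclideanSpace ℝ (Fin n) →ₗ[ℝ] EuclideanSpace ℝ (Fin m)) with hK2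
    set y : EuclideanSpace ℝ (Fin m) := (K2.orthogonalProjectionOnto z : EuclideanSpace ℝ (Fin m)) with hy
    have hyK2 : y ∈ K2 := (K2.orthogonalProjectionOnto z).2
    have hw : z - y ∈ K2ᗮ := Submodule.sub_starProjection_mem_orthogonal (K := K2) z
    have hwo := (Submodule.mem_orthogonal K2 (z - y)).mp hw
    have hAw : A (z - y) = 0 := by
      have h2 : ∀ v, ⟪A (z - y), v⟫ = 0 := by
        intro v
        rw [ContinuousLinearMap.adjoint_inner_left, real_inner_comm]
        exact hwo (J v) ⟨v, rfl⟩
      have := h2 (A (z - y))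
      rwa [real_inner_self_eq_norm_sq, pow_eq_zero_iff (by norm_num), norm_eq_zero] at this
    have hAy : A y = -g := by
      have : A y = A z - A (z - y) := by rw [← map_sub]; congr 1; abel
      rw [this, hAw, hz, sub_zero]
    obtain ⟨u, hu⟩ := hyK2
    have hynorm : ‖y‖ ≤ τ := by
      have hsq : ‖y‖ * ‖y‖ ≤ τ * ‖y‖ := by
        have e1 : ⟪y, y⟫ = ‖y‖ * ‖y‖ := real_inner_self_eq_norm_mul_norm y
        have e2 : ⟪y, y⟫ = -⟪g, u⟫ := by
          calc ⟪y, y⟫ = ⟪J u, y⟫ := by rw [show J u = y from hu]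
          _ = ⟪u, A y⟫ := (ContinuousLinearMap.adjoint_inner_right J u y).symm
          _ = ⟪u, -g⟫ := by rw [hAy]
          _ = -⟪g, u⟫ := by rw [inner_neg_right, real_inner_comm]
        have h1u := h1 u
        rw [show J u = y from hu] at h1u
        rw [e2] at e1
        linarith
      rcases (norm_nonneg y).eq_or_lt with h0 | h0
      · rw [← h0]; exact hτ.le
      · exact le_of_mul_le_mul_right hsq h0
    refine ⟨y, hynorm, by rw [hAy]; simp, fun h => absurd hc0 h, fun _ =>
      ⟨-y, by rw [map_neg, hAy, neg_neg], hc0⟩⟩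
  · -- case c xb ≠ 0
    have hcpos : 0 < ‖c xb‖ := norm_pos_iff.mpr hc0
    have ha : ∀ v, 0 ≤ ⟪g, v⟫ + τ * (⟪c xb, J v⟫ / ‖c xb‖) := by
      intro v
      apply aux_nonneg (C := τ * (‖J v‖ ^ 2 / (2 * ‖c xb‖)) + σ / 2 * ‖v‖ ^ 2)
      intro t ht
      have hmt := hm (t • v)
      simp only [map_smul, real_inner_smul_right, norm_smul, Real.norm_eq_abs,
        abs_of_pos ht, mul_pow] at hmt
      have hb := aux_norm_add (c xb) (t • J v) hc0
      rw [inner_smul_right, norm_smul, Real.norm_eq_abs, abs_of_pos ht, mul_pow,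
        mul_div_assoc, mul_div_assoc] at hb
      nlinarith [mul_le_mul_of_nonneg_left hb hτ.le, hmt, ht]
    have haz : ∀ v, ⟪g, v⟫ + τ * (⟪c xb, J v⟫ / ‖c xb‖) = 0 := by
      intro v
      have h1 := ha v
      have h2 := ha (-v)
      rw [map_neg, inner_neg_right, inner_neg_right, neg_div, mul_neg] at h2
      linarith
    refine ⟨(τ / ‖c xb‖) • c xb, ?_, ?_, fun _ => rfl, fun h => absurd h hc0⟩
    · rw [norm_smul, Real.norm_eq_abs, abs_of_pos (by positivity), div_mul_cancel₀ _ (ne_of_gt hcpos)]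
    · have h2 : ∀ v, ⟪g + A ((τ / ‖c xb‖) • c xb), v⟫ = 0 := by
        intro v
        rw [inner_add_left, ContinuousLinearMap.adjoint_inner_left, real_inner_smul_left,
          div_mul_eq_mul_div, mul_div_assoc]
        exact haz v
      have := h2 (g + A ((τ / ‖c xb‖) • c xb))
      rwa [inner_self_eq_zero] at this
end

section
/- Let c : ℝⁿ → ℝᵐ be continuously differentiable with Jacobian J, and let x ∈ ℝⁿ be such that J(x) has full row rank. If s = 0 is a global minimizer of the function s ↦ ‖c(x) + J(x) s‖₂ + (1/2)‖s‖₂², then c(x) = 0. -/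
/-- **Stationarity of the proximal feasibility model implies feasibility under MFCQ.**
If `J(x)` has full row rank (is surjective) and `s = 0` globally minimizes
`s ↦ ‖c(x) + J(x)s‖₂ + (1/2)‖s‖₂²`, then `c(x) = 0`. -/
theorem stmt_3 {n m : ℕ}
    (c : EuclideanSpace ℝ (Fin n) → EuclideanSpace ℝ (Fin m))
    (hc : ContDiff ℝ 1 c)
    (x : EuclideanSpace ℝ (Fin n))
    (hrank : Function.Surjective ⇑(fderiv ℝ c x))
    (hmin : ∀ s : EuclideanSpace ℝ (Fin n),
      ‖c x + fderiv ℝ c x 0‖ + 1 / 2 * ‖(0 : EuclideanSpace ℝ (Fin n))‖ ^ 2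
        ≤ ‖c x + fderiv ℝ c x s‖ + 1 / 2 * ‖s‖ ^ 2) :
    c x = 0 := by
  obtain ⟨s, hs⟩ := hrank (-(c x))
  by_contra hne
  have hcx : 0 < ‖c x‖ := norm_pos_iff.mpr hne
  have hs0 : s ≠ 0 := by
    rintro rfl
    simp only [map_zero] at hs
    exact hne (by simpa using hs.symm)
  have hsn : 0 < ‖s‖ ^ 2 := pow_pos (norm_pos_iff.mpr hs0) 2
  set t : ℝ := min 1 (‖c x‖ / ‖s‖ ^ 2) with ht
  have ht0 : 0 < t := lt_min one_pos (div_pos hcx hsn)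
  have ht1 : t ≤ 1 := min_le_left _ _
  have htr : t * ‖s‖ ^ 2 ≤ ‖c x‖ := by
    rw [ht]
    calc min 1 (‖c x‖ / ‖s‖ ^ 2) * ‖s‖ ^ 2 ≤ (‖c x‖ / ‖s‖ ^ 2) * ‖s‖ ^ 2 := by
          exact mul_le_mul_of_nonneg_right (min_le_right _ _) (le_of_lt hsn)
      _ = ‖c x‖ := by field_simp
  have key := hmin (t • s)
  have h2 : c x + fderiv ℝ c x (t • s) = (1 - t) • c x := by
    rw [map_smul, hs]; module
  rw [h2, map_zero, add_zero, norm_zero, norm_smul, norm_smul] at key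
  simp only [Real.norm_eq_abs, abs_of_nonneg (sub_nonneg.mpr ht1),
    abs_of_pos ht0, mul_pow] at key
  nlinarith [key, ht0, htr, hcx, sq_nonneg t]
end

section
/- Let f : ℝⁿ → ℝ and c : ℝⁿ → ℝᵐ be continuously differentiable, x ∈ ℝⁿ, τ > 0 and σ > 0. Define ξ(x; σ, τ) := f(x) + τ‖c(x)‖₂ − inf over s ∈ ℝⁿ of [f(x) + ∇f(x)ᵀs + τ‖c(x) + J(x)s‖₂ + (σ/2)‖s‖₂²], and ξ_TR(x, τ) := f(x) + τ‖c(x)‖₂ − min over s with ‖s‖₂ ≤ 1 of [f(x) + ∇f(x)ᵀs + τ‖c(x) + J(x)s‖₂]. Then ξ(x; σ, τ) ≥ (1/2)·min(1, σ⁻¹ ξ_TR(x, τ))·ξ_TR(x, τ). -/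
open scoped RealInnerProductSpace

/-- Regularized stationarity measure
`ξ(x; σ, τ) = f(x) + τ‖c(x)‖₂ − inf_{s} [f(x) + ∇f(x)ᵀs + τ‖c(x) + J(x)s‖₂ + (σ/2)‖s‖₂²]`. -/
noncomputable def xi {n m : ℕ}
    (f : EuclideanSpace ℝ (Fin n) → ℝ)
    (c : EuclideanSpace ℝ (Fin n) → EuclideanSpace ℝ (Fin m))
    (x : EuclideanSpace ℝ (Fin n)) (σ τ : ℝ) : ℝ :=
  f x + τ * ‖c x‖ -
    ⨅ s : EuclideanSpace ℝ (Fin n),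
      (f x + (inner ℝ (gradient f x) s : ℝ) + τ * ‖c x + fderiv ℝ c x s‖ + σ / 2 * ‖s‖ ^ 2)

/-- Trust-region stationarity measure
`ξ_TR(x, τ) = f(x) + τ‖c(x)‖₂ − min_{‖s‖₂ ≤ 1} [f(x) + ∇f(x)ᵀs + τ‖c(x) + J(x)s‖₂]`. -/
noncomputable def xiTR {n m : ℕ}
    (f : EuclideanSpace ℝ (Fin n) → ℝ)
    (c : EuclideanSpace ℝ (Fin n) → EuclideanSpace ℝ (Fin m))
    (x : EuclideanSpace ℝ (Fin n)) (τ : ℝ) : ℝ :=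
  f x + τ * ‖c x‖ -
    sInf ((fun s => f x + (inner ℝ (gradient f x) s : ℝ) + τ * ‖c x + fderiv ℝ c x s‖) ''
      {s : EuclideanSpace ℝ (Fin n) | ‖s‖ ≤ 1})

set_option maxHeartbeats 1000000 in
/-- **Lemma `lemma:xiTR`, first part.**
`ξ(x; σ, τ) ≥ (1/2)·min(1, σ⁻¹ ξ_TR(x, τ))·ξ_TR(x, τ)`. -/
theorem stmt_4 {n m : ℕ}
    (f : EuclideanSpace ℝ (Fin n) → ℝ)
    (c : EuclideanSpace ℝ (Fin n) → EuclideanSpace ℝ (Fin m))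
    (hf : ContDiff ℝ 1 f) (hc : ContDiff ℝ 1 c)
    (x : EuclideanSpace ℝ (Fin n)) (τ σ : ℝ) (hτ : 0 < τ) (hσ : 0 < σ) :
    xi f c x σ τ ≥ 1 / 2 * min 1 (σ⁻¹ * xiTR f c x τ) * xiTR f c x τ := by
  classical
  set g := gradient f x with hg
  set J := fderiv ℝ c x with hJ
  set C := c x with hC
  set F : EuclideanSpace ℝ (Fin n) → ℝ :=
    fun s => f x + (inner ℝ g s : ℝ) + τ * ‖C + J s‖ with hF
  have hFc : Continuous F := by
    apply Continuous.add
    · exact (continuous_const.add (continuous_const.inner continuous_id))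
    · exact continuous_const.mul ((continuous_const.add J.continuous).norm)
  have hset : {s : EuclideanSpace ℝ (Fin n) | ‖s‖ ≤ 1} = Metric.closedBall 0 1 := by
    ext s; simp [Metric.mem_closedBall, dist_zero_right]
  have hcpt : IsCompact {s : EuclideanSpace ℝ (Fin n) | ‖s‖ ≤ 1} := by
    rw [hset]; exact isCompact_closedBall 0 1
  have hne : ({s : EuclideanSpace ℝ (Fin n) | ‖s‖ ≤ 1}).Nonempty := ⟨0, by simp⟩
  obtain ⟨s₀, hs₀mem, hs₀min⟩ := hcpt.exists_isMinOn hne hFc.continuousOn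
  have hA : sInf (F '' {s : EuclideanSpace ℝ (Fin n) | ‖s‖ ≤ 1}) = F s₀ := by
    apply IsLeast.csInf_eq
    refine ⟨⟨s₀, hs₀mem, rfl⟩, ?_⟩
    rintro y ⟨s, hs, rfl⟩
    exact hs₀min hs
  set M := xiTR f c x τ with hMdef
  have hMeq : M = τ * ‖C‖ - ((inner ℝ g s₀ : ℝ) + τ * ‖C + J s₀‖) := by
    rw [hMdef, xiTR, ← hg, ← hJ, ← hC, ← hF, hA, hF]
    ring
  have hM0 : 0 ≤ M := by
    have h0 : F s₀ ≤ F 0 := hs₀min (by simp)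
    have hF0 : F 0 = f x + τ * ‖C‖ := by simp [hF]
    rw [hMeq]
    simp only [hF, map_zero, add_zero, inner_zero_right] at h0
    linarith
  set α := min 1 (σ⁻¹ * M) with hα
  have hα0 : 0 ≤ α := le_min zero_le_one (by positivity)
  have hα1 : α ≤ 1 := min_le_left _ _
  -- bound the value at α • s₀
  have hinner : (inner ℝ g (α • s₀) : ℝ) = α * (inner ℝ g s₀ : ℝ) := real_inner_smul_right g s₀ α
  have hnormeq : C + J (α • s₀) = (1 - α) • C + α • (C + J s₀) := by
    rw [map_smul]; module
  have hnorm : ‖C + J (α • s₀)‖ ≤ (1 - α) * ‖C‖ + α * ‖C + J s₀‖ := by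
    rw [hnormeq]
    refine le_trans (norm_add_le _ _) ?_
    rw [norm_smul, norm_smul, Real.norm_eq_abs, Real.norm_eq_abs,
      abs_of_nonneg (by linarith), abs_of_nonneg hα0]
  have hnrmsq : ‖α • s₀‖ ^ 2 ≤ α ^ 2 := by
    rw [norm_smul, Real.norm_eq_abs, abs_of_nonneg hα0, mul_pow]
    have hs1 : ‖s₀‖ ≤ 1 := hs₀mem
    have hs2 : ‖s₀‖ ^ 2 ≤ 1 := by nlinarith [norm_nonneg s₀]
    nlinarith [sq_nonneg α]
  have hbdd : BddBelow (Set.range fun s : EuclideanSpace ℝ (Fin n) =>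
      f x + (inner ℝ g s : ℝ) + τ * ‖C + J s‖ + σ / 2 * ‖s‖ ^ 2) := by
    refine ⟨f x - ‖g‖ ^ 2 / (2 * σ), ?_⟩
    rintro y ⟨s, rfl⟩
    have h1 : -(‖g‖ * ‖s‖) ≤ (inner ℝ g s : ℝ) :=
      neg_le_of_abs_le (abs_real_inner_le_norm g s)
    have h2 : 0 ≤ τ * ‖C + J s‖ := by positivity
    have h2σ : (0:ℝ) < 2 * σ := by linarith
    have key : ‖g‖ * ‖s‖ - σ / 2 * ‖s‖ ^ 2 ≤ ‖g‖ ^ 2 / (2 * σ) := by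
      rw [le_div_iff₀ h2σ]
      nlinarith [sq_nonneg (σ * ‖s‖ - ‖g‖)]
    linarith
  have hinf : (⨅ s : EuclideanSpace ℝ (Fin n),
      (f x + (inner ℝ g s : ℝ) + τ * ‖C + J s‖ + σ / 2 * ‖s‖ ^ 2))
      ≤ f x + (inner ℝ g (α • s₀) : ℝ) + τ * ‖C + J (α • s₀)‖ + σ / 2 * ‖α • s₀‖ ^ 2 :=
    ciInf_le hbdd (α • s₀)
  have hval : f x + (inner ℝ g (α • s₀) : ℝ) + τ * ‖C + J (α • s₀)‖ + σ / 2 * ‖α • s₀‖ ^ 2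
      ≤ f x + τ * ‖C‖ - (α * M - σ * α ^ 2 / 2) := by
    have hM' : (inner ℝ g s₀ : ℝ) + τ * ‖C + J s₀‖ = τ * ‖C‖ - M := by linarith [hMeq]
    rw [hinner]
    nlinarith [hnorm, hnrmsq, hτ.le, hα0]
  have hxi : xi f c x σ τ ≥ α * M - σ * α ^ 2 / 2 := by
    rw [xi, ← hg, ← hJ, ← hC]
    have := le_trans hinf hval
    linarith
  refine le_trans ?_ hxi
  rcases le_total (σ⁻¹ * M) 1 with h | h
  · have hαeq : α = σ⁻¹ * M := min_eq_right h
    rw [hαeq]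
    have hσ' : σ ≠ 0 := ne_of_gt hσ
    field_simp
    ring_nf
    have hkey : M ^ 2 * σ ^ 2 * σ⁻¹ ^ 3 * (1 / 2) = M ^ 2 * σ⁻¹ * (1 / 2) := by
      field_simp
    linarith
  · have hαeq : α = 1 := min_eq_left h
    have hMσ : σ ≤ M := by
      rw [inv_mul_eq_div, le_div_iff₀ hσ] at h; linarith
    rw [hαeq]
    nlinarith
end

section
/- Let c : ℝⁿ → ℝᵐ be continuously differentiable with Jacobian J, and let x ∈ ℝⁿ. Let s* be a global minimizer of s ↦ (1/2)‖s‖₂² + ‖c(x) + J(x)s‖₂, and define θ(x) := ‖c(x)‖₂ − ‖c(x) + J(x)s*‖₂ and θ_TR(x) := ‖c(x)‖₂ − min over s with ‖s‖₂ ≤ 1 of ‖c(x) + J(x)s‖₂. Then θ_TR(x) ≥ min(1/√2, θ(x)^{1/2})·θ(x)^{1/2}. -/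
/-- **Lemma `lemma:thetaTR`.**
Let `s*` globally minimize `s ↦ (1/2)‖s‖₂² + ‖c(x) + J(x)s‖₂`, and set
`θ(x) = ‖c(x)‖₂ − ‖c(x) + J(x)s*‖₂` and
`θ_TR(x) = ‖c(x)‖₂ − min_{‖s‖₂ ≤ 1} ‖c(x) + J(x)s‖₂`.
Then `θ_TR(x) ≥ min(1/√2, θ(x)^{1/2})·θ(x)^{1/2}`. -/
theorem stmt_6 {n m : ℕ}
    (c : EuclideanSpace ℝ (Fin n) → EuclideanSpace ℝ (Fin m))
    (hc : ContDiff ℝ 1 c)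
    (x : EuclideanSpace ℝ (Fin n))
    (sstar : EuclideanSpace ℝ (Fin n))
    (hsstar : ∀ s : EuclideanSpace ℝ (Fin n),
      1 / 2 * ‖sstar‖ ^ 2 + ‖c x + fderiv ℝ c x sstar‖
        ≤ 1 / 2 * ‖s‖ ^ 2 + ‖c x + fderiv ℝ c x s‖) :
    ‖c x‖ - sInf ((fun s => ‖c x + fderiv ℝ c x s‖) '' {s : EuclideanSpace ℝ (Fin n) | ‖s‖ ≤ 1})
      ≥ min (1 / Real.sqrt 2) (Real.sqrt (‖c x‖ - ‖c x + fderiv ℝ c x sstar‖)) *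
          Real.sqrt (‖c x‖ - ‖c x + fderiv ℝ c x sstar‖) := by
  set J := fderiv ℝ c x with hJ
  set cx := c x with hcx
  set θ := ‖cx‖ - ‖cx + J sstar‖ with hθ
  have h0 := hsstar 0
  rw [map_zero, add_zero, norm_zero] at h0
  have hsq : ‖sstar‖ ^ 2 ≤ 2 * θ := by rw [hθ]; nlinarith
  have hθ0 : 0 ≤ θ := by nlinarith [sq_nonneg ‖sstar‖]
  have hbdd : BddBelow ((fun s => ‖cx + J s‖) '' {s : EuclideanSpace ℝ (Fin n) | ‖s‖ ≤ 1}) := by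
    refine ⟨0, ?_⟩
    rintro y ⟨s, -, rfl⟩
    exact norm_nonneg _
  have key : ∀ t : ℝ, 0 ≤ t → t ≤ 1 → ‖t • sstar‖ ≤ 1 →
      sInf ((fun s => ‖cx + J s‖) '' {s : EuclideanSpace ℝ (Fin n) | ‖s‖ ≤ 1})
        ≤ ‖cx‖ - t * θ := by
    intro t ht0 ht1 htn
    have hmem : ‖cx + J (t • sstar)‖ ∈
        (fun s => ‖cx + J s‖) '' {s : EuclideanSpace ℝ (Fin n) | ‖s‖ ≤ 1} :=
      ⟨t • sstar, htn, rfl⟩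
    refine (csInf_le hbdd hmem).trans ?_
    have heq : cx + J (t • sstar) = (1 - t) • cx + t • (cx + J sstar) := by
      rw [map_smul]; module
    rw [heq]
    calc ‖(1 - t) • cx + t • (cx + J sstar)‖
        ≤ (1 - t) * ‖cx‖ + t * ‖cx + J sstar‖ := by
          refine (norm_add_le _ _).trans ?_
          rw [norm_smul, norm_smul, Real.norm_eq_abs, abs_of_nonneg (by linarith),
            Real.norm_eq_abs, abs_of_nonneg ht0]
      _ = ‖cx‖ - t * θ := by rw [hθ]; ring
  have hsqrt : Real.sqrt θ * Real.sqrt θ = θ := Real.mul_self_sqrt hθ0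
  have hsqrt2 : Real.sqrt 2 * Real.sqrt 2 = 2 := Real.mul_self_sqrt (by norm_num)
  have hsqrt2pos : 0 < Real.sqrt 2 := Real.sqrt_pos.mpr (by norm_num)
  by_cases hns : ‖sstar‖ ≤ 1
  · have h1 := key 1 zero_le_one le_rfl (by rwa [one_smul])
    have : min (1 / Real.sqrt 2) (Real.sqrt θ) * Real.sqrt θ ≤ θ := by
      calc min (1 / Real.sqrt 2) (Real.sqrt θ) * Real.sqrt θ
          ≤ Real.sqrt θ * Real.sqrt θ :=
            mul_le_mul_of_nonneg_right (min_le_right _ _) (Real.sqrt_nonneg _)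
        _ = θ := hsqrt
    linarith
  · push_neg at hns
    have hspos : (0 : ℝ) < ‖sstar‖ := by linarith
    have h1 := key (1 / ‖sstar‖) (by positivity) (by
        rw [div_le_one hspos]; linarith)
      (by rw [norm_smul, Real.norm_eq_abs, abs_of_nonneg (by positivity),
        one_div_mul_cancel (ne_of_gt hspos)])
    have hss : ‖sstar‖ ≤ Real.sqrt 2 * Real.sqrt θ := by
      rw [← Real.sqrt_mul (by norm_num : (0:ℝ) ≤ 2)]
      exact (Real.le_sqrt (norm_nonneg _) (by positivity)).mpr hsq
    have hfin : min (1 / Real.sqrt 2) (Real.sqrt θ) * Real.sqrt θ ≤ 1 / ‖sstar‖ * θ := by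
      calc min (1 / Real.sqrt 2) (Real.sqrt θ) * Real.sqrt θ
          ≤ 1 / Real.sqrt 2 * Real.sqrt θ :=
            mul_le_mul_of_nonneg_right (min_le_left _ _) (Real.sqrt_nonneg _)
        _ ≤ 1 / ‖sstar‖ * θ := by
            rw [div_mul_eq_mul_div, div_mul_eq_mul_div, one_mul, one_mul,
              div_le_div_iff₀ hsqrt2pos hspos]
            nlinarith [Real.sqrt_nonneg θ]
    linarith
end

section
/- Let A ∈ ℝ^{m×n} and b ∈ ℝᵐ, and let s* be a global minimizer of s ↦ (1/2)‖s‖₂² + ‖b + A s‖₂. Then ‖b‖₂ − ‖b + A s*‖₂ ≥ ‖s*‖₂². -/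
open Matrix

/-- **Subgradient-based decrease of the feasibility model.**
If `s*` globally minimizes `s ↦ (1/2)‖s‖₂² + ‖b + As‖₂`, then
`‖b‖₂ − ‖b + As*‖₂ ≥ ‖s*‖₂²`. -/
theorem stmt_8 {m n : ℕ} (A : Matrix (Fin m) (Fin n) ℝ) (b : EuclideanSpace ℝ (Fin m))
    (sstar : EuclideanSpace ℝ (Fin n))
    (hsstar : ∀ s : EuclideanSpace ℝ (Fin n),
      1 / 2 * ‖sstar‖ ^ 2 + ‖b + Matrix.toEuclideanLin A sstar‖
        ≤ 1 / 2 * ‖s‖ ^ 2 + ‖b + Matrix.toEuclideanLin A s‖) :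
    ‖b‖ - ‖b + Matrix.toEuclideanLin A sstar‖ ≥ ‖sstar‖ ^ 2 := by
  set r := ‖b + Matrix.toEuclideanLin A sstar‖ with hr
  set c := ‖sstar‖ with hc
  -- key estimate for all small t
  have key : ∀ t : ℝ, 0 < t → t ≤ 1 → (1 - t / 2) * c ^ 2 ≤ ‖b‖ - r := by
    intro t ht ht1
    have h := hsstar ((1 - t) • sstar)
    have hlin : Matrix.toEuclideanLin A ((1 - t) • sstar)
        = (1 - t) • Matrix.toEuclideanLin A sstar := by
      simp [_root_.map_smul]
    have hnorm : ‖((1 - t) • sstar : EuclideanSpace ℝ (Fin n))‖ = (1 - t) * c := by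
      rw [norm_smul, Real.norm_eq_abs, abs_of_nonneg (by linarith)]
    have hsplit : (b : EuclideanSpace ℝ (Fin m)) + (1 - t) • Matrix.toEuclideanLin A sstar
        = (1 - t) • (b + Matrix.toEuclideanLin A sstar) + t • b := by
      rw [smul_add]
      module
    have hbound : ‖(b : EuclideanSpace ℝ (Fin m)) + (1 - t) • Matrix.toEuclideanLin A sstar‖
        ≤ (1 - t) * r + t * ‖b‖ := by
      rw [hsplit]
      calc ‖(1 - t) • (b + Matrix.toEuclideanLin A sstar) + t • b‖
          ≤ ‖(1 - t) • (b + Matrix.toEuclideanLin A sstar)‖ + ‖t • b‖ := norm_add_le _ _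
        _ = (1 - t) * r + t * ‖b‖ := by
            rw [norm_smul, norm_smul, Real.norm_eq_abs, Real.norm_eq_abs,
              abs_of_nonneg (by linarith), abs_of_nonneg (by linarith)]
    rw [hlin, hnorm] at h
    have h2 : 1 / 2 * c ^ 2 + r ≤ 1 / 2 * ((1 - t) * c) ^ 2 + ((1 - t) * r + t * ‖b‖) :=
      h.trans (by linarith)
    have hfin : t * ((1 - t / 2) * c ^ 2) ≤ t * (‖b‖ - r) := by nlinarith
    exact le_of_mul_le_mul_left hfin ht
  -- ε-argument
  have hce : c ^ 2 ≤ ‖b‖ - r := by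
    refine le_of_forall_pos_le_add ?_
    intro ε hε
    have hc2 : (0:ℝ) ≤ c ^ 2 := sq_nonneg c
    set t := min 1 (ε / (c ^ 2 + 1)) with htdef
    have hden : (0:ℝ) < c ^ 2 + 1 := by linarith
    have ht0 : 0 < t := lt_min one_pos (div_pos hε hden)
    have ht1 : t ≤ 1 := min_le_left _ _
    have hk := key t ht0 ht1
    have htle : t ≤ ε / (c ^ 2 + 1) := min_le_right _ _
    have : t / 2 * c ^ 2 ≤ ε := by
      have h1 : t * c ^ 2 ≤ ε / (c ^ 2 + 1) * (c ^ 2 + 1) := by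
        have := mul_le_mul_of_nonneg_right htle hc2
        nlinarith [div_nonneg hε.le hden.le]
      rw [div_mul_cancel₀ _ (ne_of_gt hden)] at h1
      linarith
    nlinarith
  linarith
end

section
/- Let A ∈ ℝ^{m×n}, v ∈ ℝᵐ with v ≠ 0, set M := A Aᵀ, and let ν > 0, τ > 0. For α > 0 define s(α) := −(M + α I)⁻¹ v and φ(α) := 1/‖s(α)‖₂ − 1/(ν τ). Then φ is strictly increasing and concave on (0, ∞), and φ is differentiable on (0, ∞) with φ'(α) = (s(α)ᵀ (M + α I)⁻¹ s(α)) / ‖s(α)‖₂³ for every α > 0. -/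
open Matrix

/-- The Euclidean (`ℓ₂`) norm of a vector in `Fin k → ℝ`. -/
noncomputable def norm2 {k : ℕ} (v : Fin k → ℝ) : ℝ := Real.sqrt (∑ i, v i ^ 2)

/-- `s(α) = −(M + αI)⁻¹ v`. -/
noncomputable def sVec {m : ℕ} (M : Matrix (Fin m) (Fin m) ℝ) (v : Fin m → ℝ) (α : ℝ) :
    Fin m → ℝ :=
  -((M + α • (1 : Matrix (Fin m) (Fin m) ℝ))⁻¹.mulVec v)

attribute [local instance] Matrix.linftyOpNormedRing Matrix.linftyOpNormedAlgebra

namespace Stmt18Aux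

variable {m : ℕ}

noncomputable def Bm (M : Matrix (Fin m) (Fin m) ℝ) (α : ℝ) : Matrix (Fin m) (Fin m) ℝ :=
  (M + α • (1 : Matrix (Fin m) (Fin m) ℝ))⁻¹

lemma posDef_smul_one {α : ℝ} (hα : 0 < α) :
    (α • (1 : Matrix (Fin m) (Fin m) ℝ)).PosDef := by
  refine Matrix.PosDef.of_dotProduct_mulVec_pos ?_ ?_
  · simp [Matrix.IsHermitian, conjTranspose_smul, star_trivial]
  · intro x hx
    have : star x ⬝ᵥ (α • (1 : Matrix (Fin m) (Fin m) ℝ)) *ᵥ x = α * (star x ⬝ᵥ x) := by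
      simp [smul_mulVec, one_mulVec, dotProduct_smul]
    rw [this]
    exact mul_pos hα (dotProduct_star_self_pos_iff.mpr hx)

lemma posDef_P {M : Matrix (Fin m) (Fin m) ℝ} (hpsd : M.PosSemidef) {α : ℝ} (hα : 0 < α) :
    (M + α • (1 : Matrix (Fin m) (Fin m) ℝ)).PosDef :=
  Matrix.PosDef.posSemidef_add hpsd (posDef_smul_one hα)

lemma hasDerivAt_Bm {M : Matrix (Fin m) (Fin m) ℝ} (hpsd : M.PosSemidef) {α : ℝ} (hα : 0 < α) :
    HasDerivAt (Bm M) (-(Bm M α * Bm M α)) α := by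
  have hu := (posDef_P hpsd hα).isUnit
  have h1 : HasDerivAt (fun β : ℝ => M + β • (1 : Matrix (Fin m) (Fin m) ℝ))
      (1 : Matrix (Fin m) (Fin m) ℝ) α := by
    exact (((hasDerivAt_id α).smul_const (1 : Matrix (Fin m) (Fin m) ℝ)).const_add M).congr_deriv (by simp)
  have h2 := hasFDerivAt_ringInverse (𝕜 := ℝ) hu.unit
  rw [hu.unit_spec] at h2
  have h3 := h2.comp_hasDerivAt α h1
  have hinv : (↑hu.unit⁻¹ : Matrix (Fin m) (Fin m) ℝ) = Bm M α := by
    rw [Bm, Matrix.nonsing_inv_eq_ringInverse, ← Ring.inverse_unit hu.unit, hu.unit_spec]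
  have hfun : (fun β : ℝ => Ring.inverse (M + β • (1 : Matrix (Fin m) (Fin m) ℝ))) = Bm M := by
    funext β; rw [Bm, Matrix.nonsing_inv_eq_ringInverse]
  rw [Function.comp_def] at h3
  rw [hfun] at h3
  simp [hinv] at h3
  exact h3

noncomputable def dotCLM (a b : Fin m → ℝ) : Matrix (Fin m) (Fin m) ℝ →L[ℝ] ℝ :=
  LinearMap.toContinuousLinearMap
    { toFun := fun X => a ⬝ᵥ (X *ᵥ b)
      map_add' := fun X Y => by simp [Matrix.add_mulVec]
      map_smul' := fun c X => by simp [Matrix.smul_mulVec] }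

@[simp] lemma dotCLM_apply (a b : Fin m → ℝ) (X : Matrix (Fin m) (Fin m) ℝ) :
    dotCLM a b X = a ⬝ᵥ (X *ᵥ b) := rfl

noncomputable def g2 (M : Matrix (Fin m) (Fin m) ℝ) (v : Fin m → ℝ) (α : ℝ) : ℝ :=
  v ⬝ᵥ ((Bm M α * Bm M α) *ᵥ v)

noncomputable def g3 (M : Matrix (Fin m) (Fin m) ℝ) (v : Fin m → ℝ) (α : ℝ) : ℝ :=
  v ⬝ᵥ ((Bm M α * (Bm M α * Bm M α)) *ᵥ v)

noncomputable def g4 (M : Matrix (Fin m) (Fin m) ℝ) (v : Fin m → ℝ) (α : ℝ) : ℝ :=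
  v ⬝ᵥ ((Bm M α * (Bm M α * (Bm M α * Bm M α))) *ᵥ v)

variable {M : Matrix (Fin m) (Fin m) ℝ} {v : Fin m → ℝ} {α : ℝ}

lemma hasDerivAt_g2 (hpsd : M.PosSemidef) (hα : 0 < α) :
    HasDerivAt (g2 M v) (-2 * g3 M v α) α := by
  have hB := hasDerivAt_Bm hpsd hα
  have h2 := hB.mul hB
  have h := (dotCLM v v).hasFDerivAt.comp_hasDerivAt α h2
  have hval : dotCLM v v (-(Bm M α * Bm M α) * Bm M α + Bm M α * -(Bm M α * Bm M α))
      = -2 * g3 M v α := by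
    simp [g3, Matrix.add_mulVec, Matrix.neg_mulVec, mul_assoc]
    ring
  replace h := h.congr_deriv hval
  exact h

lemma hasDerivAt_g3 (hpsd : M.PosSemidef) (hα : 0 < α) :
    HasDerivAt (g3 M v) (-3 * g4 M v α) α := by
  have hB := hasDerivAt_Bm hpsd hα
  have h3 := hB.mul (hB.mul hB)
  have h := (dotCLM v v).hasFDerivAt.comp_hasDerivAt α h3
  have hval : dotCLM v v (-(Bm M α * Bm M α) * (Bm M α * Bm M α) +
      Bm M α * (-(Bm M α * Bm M α) * Bm M α + Bm M α * -(Bm M α * Bm M α)))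
      = -3 * g4 M v α := by
    simp [g4, Matrix.add_mulVec, Matrix.neg_mulVec, Matrix.mul_add, Matrix.mul_neg, mul_assoc]
    ring
  replace h := h.congr_deriv hval
  exact h

lemma Bt (hpsd : M.PosSemidef) : (Bm M α)ᵀ = Bm M α := by
  have h1 : (M + α • (1 : Matrix (Fin m) (Fin m) ℝ)).IsHermitian := by
    exact (hpsd.isHermitian.add (by simp [Matrix.IsHermitian, conjTranspose_smul, star_trivial]))
  have h2 := h1.inv
  rw [← conjTranspose_eq_transpose_of_trivial]
  exact h2

lemma dot_shift (hpsd : M.PosSemidef) (x y : Fin m → ℝ) :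
    (Bm M α *ᵥ x) ⬝ᵥ y = x ⬝ᵥ (Bm M α *ᵥ y) := by
  rw [dotProduct_mulVec, ← vecMul_transpose, Bt hpsd]

lemma g2_eq (hpsd : M.PosSemidef) :
    g2 M v α = (Bm M α *ᵥ v) ⬝ᵥ (Bm M α *ᵥ v) := by
  rw [g2, ← mulVec_mulVec, dot_shift hpsd]

lemma g3_eq (hpsd : M.PosSemidef) :
    g3 M v α = (Bm M α *ᵥ v) ⬝ᵥ (Bm M α *ᵥ (Bm M α *ᵥ v)) := by
  rw [g3, ← mulVec_mulVec, ← mulVec_mulVec, dot_shift hpsd]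

lemma g4_eq (hpsd : M.PosSemidef) :
    g4 M v α = (Bm M α *ᵥ (Bm M α *ᵥ v)) ⬝ᵥ (Bm M α *ᵥ (Bm M α *ᵥ v)) := by
  rw [g4, ← mulVec_mulVec, ← mulVec_mulVec, ← mulVec_mulVec, dot_shift hpsd, dot_shift hpsd]

lemma S_ne (hpsd : M.PosSemidef) (hv : v ≠ 0) (hα : 0 < α) : Bm M α *ᵥ v ≠ 0 := by
  intro h
  have hdet := (posDef_P hpsd hα).det_pos.ne'.isUnit
  have : (M + α • (1 : Matrix (Fin m) (Fin m) ℝ)) *ᵥ (Bm M α *ᵥ v) = v := by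
    rw [mulVec_mulVec, Bm, Matrix.mul_nonsing_inv _ hdet, one_mulVec]
  rw [h, mulVec_zero] at this
  exact hv this.symm

lemma g2_pos (hpsd : M.PosSemidef) (hv : v ≠ 0) (hα : 0 < α) : 0 < g2 M v α := by
  rw [g2_eq hpsd]
  have := dotProduct_star_self_pos_iff.mpr (S_ne hpsd hv hα)
  simpa [star_trivial] using this

lemma g3_pos (hpsd : M.PosSemidef) (hv : v ≠ 0) (hα : 0 < α) : 0 < g3 M v α := by
  rw [g3_eq hpsd]
  have hBpos := (posDef_P hpsd hα).inv
  have := hBpos.dotProduct_mulVec_pos (S_ne hpsd hv hα)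
  simpa [star_trivial, Bm] using this

lemma cs_ineq (hpsd : M.PosSemidef) : g3 M v α ^ 2 ≤ g2 M v α * g4 M v α := by
  rw [g2_eq hpsd, g3_eq hpsd, g4_eq hpsd]
  have := Finset.sum_mul_sq_le_sq_mul_sq Finset.univ (Bm M α *ᵥ v) (Bm M α *ᵥ (Bm M α *ᵥ v))
  simpa [dotProduct, pow_two] using this

lemma norm2_sVec (hpsd : M.PosSemidef) :
    norm2 (sVec M v α) = Real.sqrt (g2 M v α) := by
  have h : (∑ i, sVec M v α i ^ 2) = g2 M v α := by
    rw [g2_eq hpsd]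
    simp [sVec, dotProduct, pow_two, Bm]
  rw [norm2, h]

lemma sdot_eq (hpsd : M.PosSemidef) :
    sVec M v α ⬝ᵥ (M + α • (1 : Matrix (Fin m) (Fin m) ℝ))⁻¹.mulVec (sVec M v α)
      = g3 M v α := by
  rw [g3_eq hpsd]
  simp [sVec, Bm, Matrix.mulVec_neg]

noncomputable def phiD (M : Matrix (Fin m) (Fin m) ℝ) (v : Fin m → ℝ) (α : ℝ) : ℝ :=
  g3 M v α / Real.sqrt (g2 M v α) ^ 3

lemma hasDerivAt_phi (hpsd : M.PosSemidef) (hv : v ≠ 0) (hα : 0 < α) (c : ℝ) :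
    HasDerivAt (fun β => 1 / norm2 (sVec M v β) - c) (phiD M v α) α := by
  have hfun : (fun β => 1 / norm2 (sVec M v β) - c)
      = fun β => (Real.sqrt (g2 M v β))⁻¹ - c := by
    funext β; rw [norm2_sVec hpsd, one_div]
  rw [hfun]
  have hg2pos := g2_pos hpsd hv hα
  have hg2' := hasDerivAt_g2 (v := v) hpsd hα
  have hsq := (Real.hasDerivAt_sqrt hg2pos.ne').comp α hg2'
  rw [Function.comp_def] at hsq
  have hsne : Real.sqrt (g2 M v α) ≠ 0 := (Real.sqrt_pos.mpr hg2pos).ne'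
  have hinv := (hsq.inv hsne).sub_const c
  refine hinv.congr_deriv ?_
  rw [phiD]
  set s := Real.sqrt (g2 M v α) with hs
  have hsne' : s ≠ 0 := hsne
  field_simp

lemma hasDerivAt_phiD (hpsd : M.PosSemidef) (hv : v ≠ 0) (hα : 0 < α) :
    HasDerivAt (phiD M v)
      (3 * Real.sqrt (g2 M v α) * (g3 M v α ^ 2 - g4 M v α * g2 M v α) / g2 M v α ^ 3) α := by
  have hg2pos := g2_pos hpsd hv hα
  have hg2' := hasDerivAt_g2 (v := v) hpsd hα
  have hg3' := hasDerivAt_g3 (v := v) hpsd hα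
  have hsq := (Real.hasDerivAt_sqrt hg2pos.ne').comp α hg2'
  rw [Function.comp_def] at hsq
  have hspos : 0 < Real.sqrt (g2 M v α) := Real.sqrt_pos.mpr hg2pos
  have hcube := hsq.pow 3
  have hcne : Real.sqrt (g2 M v α) ^ 3 ≠ 0 := by positivity
  have hdiv := hg3'.div hcube hcne
  have hφeq : phiD M v = fun β => g3 M v β / Real.sqrt (g2 M v β) ^ 3 := rfl
  rw [hφeq]
  refine hdiv.congr_deriv ?_
  simp only [Pi.pow_apply]
  set s := Real.sqrt (g2 M v α) with hs
  have hs2 : s ^ 2 = g2 M v α := Real.sq_sqrt hg2pos.le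
  field_simp
  rw [← hs2]
  ring

end Stmt18Aux

open Stmt18Aux in
/-- **Properties of the secular function `φ(α) = 1/‖s(α)‖₂ − 1/(ντ)` (cf.
Lemma `lemma:secular-derivative`).** With `M = AAᵀ` and `v ≠ 0`, `φ` is strictly
increasing and concave on `(0, ∞)`, and differentiable there with
`φ'(α) = s(α)ᵀ(M + αI)⁻¹ s(α) / ‖s(α)‖₂³`. -/
theorem stmt_18 {m n : ℕ} (A : Matrix (Fin m) (Fin n) ℝ) (v : Fin m → ℝ) (hv : v ≠ 0)
    (M : Matrix (Fin m) (Fin m) ℝ) (hM : M = A * Aᵀ) (ν τ : ℝ) (hν : 0 < ν) (hτ : 0 < τ) :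
    StrictMonoOn (fun α : ℝ => 1 / norm2 (sVec M v α) - 1 / (ν * τ)) (Set.Ioi (0 : ℝ)) ∧
    ConcaveOn ℝ (Set.Ioi (0 : ℝ)) (fun α : ℝ => 1 / norm2 (sVec M v α) - 1 / (ν * τ)) ∧
    (∀ α : ℝ, 0 < α →
      HasDerivAt (fun α : ℝ => 1 / norm2 (sVec M v α) - 1 / (ν * τ))
        ((sVec M v α ⬝ᵥ (M + α • (1 : Matrix (Fin m) (Fin m) ℝ))⁻¹.mulVec (sVec M v α)) /
          norm2 (sVec M v α) ^ 3) α) := by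
  have hpsd : M.PosSemidef := by
    rw [hM, ← Matrix.conjTranspose_eq_transpose_of_trivial]
    exact Matrix.posSemidef_self_mul_conjTranspose A
  have key : ∀ α : ℝ, 0 < α →
      HasDerivAt (fun β : ℝ => 1 / norm2 (sVec M v β) - 1 / (ν * τ)) (phiD M v α) α :=
    fun α hα => hasDerivAt_phi hpsd hv hα _
  refine ⟨?_, ?_, ?_⟩
  · refine strictMonoOn_of_hasDerivWithinAt_pos (f' := phiD M v) (convex_Ioi 0)
      (fun x hx => (key x hx).continuousAt.continuousWithinAt) ?_ ?_
    · intro x hx; rw [interior_Ioi] at hx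
      exact (key x hx).hasDerivWithinAt
    · intro x hx; rw [interior_Ioi] at hx
      exact div_pos (g3_pos hpsd hv hx) (pow_pos (Real.sqrt_pos.mpr (g2_pos hpsd hv hx)) 3)
  · refine concaveOn_of_hasDerivWithinAt2_nonpos (f' := phiD M v)
      (f'' := fun x => 3 * Real.sqrt (g2 M v x) * (g3 M v x ^ 2 - g4 M v x * g2 M v x)
        / g2 M v x ^ 3)
      (convex_Ioi 0) (fun x hx => (key x hx).continuousAt.continuousWithinAt) ?_ ?_ ?_
    · intro x hx; rw [interior_Ioi] at hx
      exact (key x hx).hasDerivWithinAt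
    · intro x hx; rw [interior_Ioi] at hx
      exact (hasDerivAt_phiD hpsd hv hx).hasDerivWithinAt
    · intro x hx; rw [interior_Ioi] at hx
      have hg2pos := g2_pos hpsd hv hx
      have hnum : 3 * Real.sqrt (g2 M v x) * (g3 M v x ^ 2 - g4 M v x * g2 M v x) ≤ 0 := by
        refine mul_nonpos_iff.mpr (Or.inl ⟨by positivity, ?_⟩)
        rw [sub_nonpos, mul_comm (g4 M v x)]
        exact cs_ineq hpsd
      exact div_nonpos_of_nonpos_of_nonneg hnum (by positivity)
  · intro α hα
    have h := key α hα
    have heq : (sVec M v α ⬝ᵥ (M + α • (1 : Matrix (Fin m) (Fin m) ℝ))⁻¹.mulVec (sVec M v α)) /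
        norm2 (sVec M v α) ^ 3 = phiD M v α := by
      rw [sdot_eq hpsd, norm2_sVec hpsd, phiD]
    rw [heq]
    exact h
end
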